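/- For n = 2 the coefficient counts ‖F_k‖ satisfy the recursion ‖F_{k+1}‖ = 2‖F_k‖ + Σ_{j=1}^{k−1} binomial(k,j) ‖F_j‖·‖F_{k−j}‖ with ‖F_1‖ = 1, and the unique solution is ‖F_k‖ = k!. -/

import Mathlib

/-- The subword of `w` consisting of the positions in `s` (in order). -/
def extract {α : Type*} (w : List α) (s : Finset ℕ) : List α :=
  (w.zipIdx.filter fun p => p.2 ∈ s).map Prod.fst

lemma extract_nil {α : Type*} (s : Finset ℕ) : extract ([] : List α) s = [] := rfl

lemma length_extract_le {α : Type*} (w : List α) (s : Finset ℕ) :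
    (extract w s).length ≤ w.length := by
  unfold extract
  rw [List.length_map]
  exact (List.length_filter_le _ _).trans (le_of_eq (List.length_zipIdx))

lemma extract_congr {α : Type*} (w : List α) {s t : Finset ℕ}
    (h : ∀ i < w.length, (i ∈ s ↔ i ∈ t)) : extract w s = extract w t := by
  unfold extract
  congr 1
  apply List.filter_congr
  intro p hp
  simp only [decide_eq_decide]
  exact h p.2 (by simpa using List.snd_lt_of_mem_zipIdx hp)

lemma extract_concat {α : Type*} (w : List α) (x : α) (s : Finset ℕ) :
    extract (w ++ [x]) s = extract w s ++ if w.length ∈ s then [x] else [] := by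
  unfold extract
  rw [List.zipIdx_append, List.filter_append, List.map_append]
  congr 1
  rw [List.zipIdx_singleton]
  by_cases h : w.length ∈ s <;> simp [h]

lemma ofFn_snoc' {α : Type*} {k : ℕ} (f : Fin k → α) (x : α) :
    List.ofFn (Fin.snoc f x) = List.ofFn f ++ [x] := by
  rw [List.ofFn_succ']
  simp [Fin.snoc_castSucc, Fin.snoc_last, List.concat_eq_append]

lemma sum_snoc {k : ℕ} (φ : (Fin (k+1) → Fin 3) → ℝ) :
    ∑ f : Fin (k+1) → Fin 3, φ f
      = ∑ x : Fin 3, ∑ f : Fin k → Fin 3, φ (Fin.snoc f x) := by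
  have h1 : (∑ f : Fin (k+1) → Fin 3, φ f)
      = ∑ p : Fin 3 × (Fin k → Fin 3), φ (Fin.snoc p.2 p.1) :=
    (Fintype.sum_equiv (Fin.snocEquiv (fun _ => Fin 3)) _ _ (fun p => rfl)).symm
  rw [h1, Fintype.sum_prod_type]

lemma key : ∀ (k : ℕ) (s : Finset ℕ), s ⊆ Finset.range k → ∀ (j m : ℕ), s.card = j →
    (Finset.range k \ s).card = m → ∀ (G : List (Fin 3) → List (Fin 3) → ℝ),
    ∑ f : Fin k → Fin 3,
        G (extract (List.ofFn f) s) (extract (List.ofFn f) (Finset.range k \ s))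
      = ∑ g : Fin j → Fin 3, ∑ h : Fin m → Fin 3, G (List.ofFn g) (List.ofFn h) := by
  intro k
  induction k with
  | zero =>
    intro s hs j m hj hm G
    simp only [Finset.range_zero, Finset.subset_empty] at hs
    subst hs
    simp only [Finset.card_empty, Finset.sdiff_empty, Finset.range_zero, Finset.card_empty] at hj hm
    subst hj; subst hm
    simp [extract_nil]
  | succ k ih =>
    intro s hs j m hj hm G
    have hlen : ∀ f : Fin k → Fin 3, (List.ofFn f).length = k := fun f => List.length_ofFn
    rw [sum_snoc (fun f => G (extract (List.ofFn f) s)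
      (extract (List.ofFn f) (Finset.range (k+1) \ s)))]
    by_cases hk : k ∈ s
    · -- k is in s
      obtain ⟨j', rfl⟩ : ∃ j', j = j' + 1 := by
        rcases j with _ | j'
        · exact absurd (Finset.card_eq_zero.mp hj ▸ hk) (Finset.notMem_empty k)
        · exact ⟨j', rfl⟩
      have hs' : s.erase k ⊆ Finset.range k := by
        intro i hi
        have h1 := Finset.mem_of_mem_erase hi
        have h2 := Finset.ne_of_mem_erase hi
        have := Finset.mem_range.mp (hs h1)
        exact Finset.mem_range.mpr (by omega)
      have hj' : (s.erase k).card = j' := by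
        rw [Finset.card_erase_of_mem hk, hj]
        omega
      have hteq : Finset.range (k+1) \ s = Finset.range k \ s.erase k := by
        ext i
        simp only [Finset.mem_sdiff, Finset.mem_range, Finset.mem_erase]
        constructor
        · rintro ⟨h1, h2⟩
          have hik : i ≠ k := fun h => h2 (h ▸ hk)
          exact ⟨by omega, fun hc => h2 hc.2⟩
        · rintro ⟨h1, h2⟩
          have hik : i ≠ k := by omega
          exact ⟨by omega, fun hc => h2 ⟨hik, hc⟩⟩
      have hm' : (Finset.range k \ s.erase k).card = m := hteq ▸ hm
      calc ∑ x : Fin 3, ∑ f : Fin k → Fin 3,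
            G (extract (List.ofFn (Fin.snoc f x)) s)
              (extract (List.ofFn (Fin.snoc f x)) (Finset.range (k+1) \ s))
          = ∑ x : Fin 3, ∑ f : Fin k → Fin 3,
            G (extract (List.ofFn f) (s.erase k) ++ [x])
              (extract (List.ofFn f) (Finset.range k \ s.erase k)) := by
            refine Finset.sum_congr rfl fun x _ => Finset.sum_congr rfl fun f _ => ?_
            rw [ofFn_snoc', extract_concat, extract_concat, hlen f, if_pos hk, hteq]
            have h2 : k ∉ Finset.range k \ s.erase k := by
              simp [Finset.mem_sdiff]
            rw [if_neg h2, List.append_nil]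
            congr 2
            apply extract_congr
            intro i hi
            rw [hlen f] at hi
            simp only [Finset.mem_erase]
            exact ⟨fun h => ⟨by omega, h⟩, fun h => h.2⟩
        _ = ∑ x : Fin 3, ∑ g : Fin j' → Fin 3, ∑ h : Fin m → Fin 3,
              G (List.ofFn g ++ [x]) (List.ofFn h) := by
            refine Finset.sum_congr rfl fun x _ => ?_
            exact ih (s.erase k) hs' j' m hj' hm' (fun u v => G (u ++ [x]) v)
        _ = ∑ g : Fin (j'+1) → Fin 3, ∑ h : Fin m → Fin 3,
              G (List.ofFn g) (List.ofFn h) := by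
            rw [sum_snoc (fun g => ∑ h : Fin m → Fin 3, G (List.ofFn g) (List.ofFn h))]
            refine Finset.sum_congr rfl fun x _ => Finset.sum_congr rfl fun g _ => ?_
            rw [ofFn_snoc']
    · -- k not in s
      have hs' : s ⊆ Finset.range k := by
        intro i hi
        have := Finset.mem_range.mp (hs hi)
        have : i ≠ k := fun h => hk (h ▸ hi)
        exact Finset.mem_range.mpr (by omega)
      obtain ⟨m', rfl⟩ : ∃ m', m = m' + 1 := by
        have hkm : k ∈ Finset.range (k+1) \ s := by
          simp [Finset.mem_sdiff, hk]
        rcases m with _ | m'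
        · exact absurd (Finset.card_eq_zero.mp hm ▸ hkm) (Finset.notMem_empty k)
        · exact ⟨m', rfl⟩
      have hteq : Finset.range (k+1) \ s = insert k (Finset.range k \ s) := by
        ext i
        simp only [Finset.mem_sdiff, Finset.mem_range, Finset.mem_insert]
        constructor
        · rintro ⟨h1, h2⟩
          rcases Nat.lt_succ_iff_lt_or_eq.mp h1 with h | h
          · exact Or.inr ⟨h, h2⟩
          · exact Or.inl h
        · rintro (rfl | ⟨h1, h2⟩)
          · exact ⟨by omega, hk⟩
          · exact ⟨by omega, h2⟩
      have hknotin : k ∉ Finset.range k \ s := by simp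
      have hm' : (Finset.range k \ s).card = m' := by
        have := hm
        rw [hteq, Finset.card_insert_of_notMem hknotin] at this
        omega
      calc ∑ x : Fin 3, ∑ f : Fin k → Fin 3,
            G (extract (List.ofFn (Fin.snoc f x)) s)
              (extract (List.ofFn (Fin.snoc f x)) (Finset.range (k+1) \ s))
          = ∑ x : Fin 3, ∑ f : Fin k → Fin 3,
            G (extract (List.ofFn f) s)
              (extract (List.ofFn f) (Finset.range k \ s) ++ [x]) := by
            refine Finset.sum_congr rfl fun x _ => Finset.sum_congr rfl fun f _ => ?_
            rw [ofFn_snoc', extract_concat, extract_concat, hlen f, if_neg hk,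
              List.append_nil]
            have h2 : k ∈ Finset.range (k+1) \ s := by simp [hk]
            rw [if_pos h2]
            congr 2
            apply extract_congr
            intro i hi
            rw [hlen f] at hi
            simp only [Finset.mem_sdiff, Finset.mem_range]
            exact ⟨fun h => ⟨hi, h.2⟩, fun h => ⟨by omega, h.2⟩⟩
        _ = ∑ x : Fin 3, ∑ g : Fin j → Fin 3, ∑ h : Fin m' → Fin 3,
              G (List.ofFn g) (List.ofFn h ++ [x]) := by
            refine Finset.sum_congr rfl fun x _ => ?_
            exact ih s hs' j m' hj hm' (fun u v => G u (v ++ [x]))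
        _ = ∑ g : Fin j → Fin 3, ∑ h : Fin (m'+1) → Fin 3,
              G (List.ofFn g) (List.ofFn h) := by
            rw [Finset.sum_comm]
            refine Finset.sum_congr rfl fun g _ => ?_
            rw [sum_snoc (fun h => G (List.ofFn g) (List.ofFn h))]
            refine Finset.sum_congr rfl fun x _ => Finset.sum_congr rfl fun h _ => ?_
            rw [ofFn_snoc']

/-- The coefficient of a word `w` in the shuffle product of two noncommutative series. -/
noncomputable def shuffleCoeff {α : Type*} (S T : List α → ℝ) (w : List α) : ℝ :=
  ∑ s ∈ (Finset.range w.length).powerset,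
    S (extract w s) * T (extract w (Finset.range w.length \ s))

/-- For `n = 2` (Riccati): if `F` solves `F = a₀ + 2F·a₁ + (F ⧢ F)·a₂` on the alphabet
`{a₀,a₁,a₂} = Fin 3`, and `N k = ‖F_k‖` is the sum of absolute values of the degree-`k`
coefficients, then `N 1 = 1`, `N(k+1) = 2·N k + ∑_{j=1}^{k-1} C(k,j)·N j·N(k-j)`, and
`N k = k!` for `k ≥ 1`. -/
theorem stmt14 (F : List (Fin 3) → ℝ)
    (hF : ∀ w : List (Fin 3),
      F w = (if w = [(0 : Fin 3)] then 1 else 0) +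
        2 * (if w.getLast? = some 1 then F w.dropLast else 0) +
        (if w.getLast? = some 2 then shuffleCoeff F F w.dropLast else 0))
    (N : ℕ → ℝ) (hN : ∀ k, N k = ∑ f : Fin k → Fin 3, |F (List.ofFn f)|) :
    N 1 = 1 ∧
    (∀ k : ℕ, 1 ≤ k →
      N (k + 1) = 2 * N k + ∑ j ∈ Finset.Ioo 0 k, (k.choose j : ℝ) * N j * N (k - j)) ∧
    (∀ k : ℕ, 1 ≤ k → N k = (k.factorial : ℝ)) := by
  have hF0 : F [] = 0 := by
    rw [hF]
    simp
  -- nonnegativity of all coefficients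
  have hpos : ∀ (n : ℕ) (w : List (Fin 3)), w.length ≤ n → 0 ≤ F w := by
    intro n
    induction n with
    | zero =>
      intro w hw
      have : w = [] := List.length_eq_zero_iff.mp (Nat.le_zero.mp hw)
      rw [this, hF0]
    | succ n ih =>
      intro w hw
      rw [hF w]
      have hd : w.dropLast.length ≤ n := by
        rw [List.length_dropLast]; omega
      have t1 : (0:ℝ) ≤ if w = [0] then 1 else 0 := by split <;> norm_num
      have t2 : (0:ℝ) ≤ 2 * (if w.getLast? = some 1 then F w.dropLast else 0) := by
        split
        · exact mul_nonneg (by norm_num) (ih _ hd)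
        · norm_num
      have t3 : (0:ℝ) ≤ if w.getLast? = some 2 then shuffleCoeff F F w.dropLast else 0 := by
        split
        · apply Finset.sum_nonneg
          intro s _
          exact mul_nonneg (ih _ ((length_extract_le _ _).trans hd))
            (ih _ ((length_extract_le _ _).trans hd))
        · norm_num
      linarith
  have hNF : ∀ j, N j = ∑ g : Fin j → Fin 3, F (List.ofFn g) := by
    intro j
    rw [hN]
    exact Finset.sum_congr rfl fun g _ => abs_of_nonneg (hpos _ _ le_rfl)
  have hsc0 : shuffleCoeff F F [] = 0 := by
    simp [shuffleCoeff, extract_nil, hF0]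
  have hN0 : N 0 = 0 := by
    rw [hNF 0, Fintype.sum_unique]
    simpa using hF0
  -- values on single letters
  have hFa : F [(0 : Fin 3)] = 1 := by
    rw [hF]
    rw [if_pos rfl, if_neg (by decide), if_neg (by decide)]
    ring
  have hFb : F [(1 : Fin 3)] = 0 := by
    rw [hF]
    rw [if_neg (by decide : ¬([(1:Fin 3)] = [0])), if_pos (by decide), if_neg (by decide)]
    simp [hF0]
  have hFc : F [(2 : Fin 3)] = 0 := by
    rw [hF]
    rw [if_neg (by decide : ¬([(2:Fin 3)] = [0])), if_neg (by decide), if_pos (by decide)]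
    simpa using hsc0
  have hN1 : N 1 = 1 := by
    rw [hNF 1]
    have e : (∑ g : Fin 1 → Fin 3, F (List.ofFn g)) = ∑ x : Fin 3, F [x] := by
      apply Fintype.sum_equiv (Equiv.funUnique (Fin 1) (Fin 3))
      intro g
      congr 1
    rw [e, Fin.sum_univ_three, hFa, hFb, hFc]
    norm_num
  -- step values
  have hnil : ∀ (v : List (Fin 3)) (x : Fin 3), v ≠ [] → v ++ [x] ≠ [0] := by
    intro v x hv h
    have := congrArg List.length h
    simp at this
    exact hv this
  have hstep0 : ∀ v : List (Fin 3), v ≠ [] → F (v ++ [(0:Fin 3)]) = 0 := by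
    intro v hv
    rw [hF]
    rw [if_neg (hnil v _ hv), List.getLast?_concat, if_neg (by decide),
      if_neg (by decide)]
    ring
  have hstep1 : ∀ v : List (Fin 3), v ≠ [] → F (v ++ [(1:Fin 3)]) = 2 * F v := by
    intro v hv
    rw [hF]
    rw [if_neg (hnil v _ hv), List.getLast?_concat, if_pos rfl, if_neg (by decide),
      List.dropLast_concat]
    ring
  have hstep2 : ∀ v : List (Fin 3), v ≠ [] →
      F (v ++ [(2:Fin 3)]) = shuffleCoeff F F v := by
    intro v hv
    rw [hF]
    rw [if_neg (hnil v _ hv), List.getLast?_concat, if_neg (by decide), if_pos rfl,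
      List.dropLast_concat]
    ring
  -- recursion
  have hrec : ∀ k : ℕ, 1 ≤ k → N (k+1) = 2 * N k +
      ∑ j ∈ Finset.Ioo 0 k, (k.choose j : ℝ) * N j * N (k - j) := by
    intro k hk
    have hnn : ∀ f : Fin k → Fin 3, List.ofFn f ≠ [] := by
      intro f h
      have := congrArg List.length h
      simp at this
      omega
    rw [hNF (k+1), sum_snoc (fun f => F (List.ofFn f))]
    have e1 : ∀ x : Fin 3, (∑ f : Fin k → Fin 3, F (List.ofFn (Fin.snoc f x)))
        = ∑ f : Fin k → Fin 3, F (List.ofFn f ++ [x]) :=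
      fun x => Finset.sum_congr rfl fun f _ => by rw [ofFn_snoc']
    rw [Fin.sum_univ_three, e1, e1, e1]
    have s0 : (∑ f : Fin k → Fin 3, F (List.ofFn f ++ [(0:Fin 3)])) = 0 :=
      Finset.sum_eq_zero fun f _ => hstep0 _ (hnn f)
    have s1 : (∑ f : Fin k → Fin 3, F (List.ofFn f ++ [(1:Fin 3)])) = 2 * N k := by
      rw [hNF k, Finset.mul_sum]
      exact Finset.sum_congr rfl fun f _ => hstep1 _ (hnn f)
    have s2 : (∑ f : Fin k → Fin 3, F (List.ofFn f ++ [(2:Fin 3)]))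
        = ∑ j ∈ Finset.Ioo 0 k, (k.choose j : ℝ) * N j * N (k - j) := by
      have e2 : (∑ f : Fin k → Fin 3, F (List.ofFn f ++ [(2:Fin 3)]))
          = ∑ f : Fin k → Fin 3, ∑ s ∈ (Finset.range k).powerset,
              F (extract (List.ofFn f) s) * F (extract (List.ofFn f) (Finset.range k \ s)) := by
        refine Finset.sum_congr rfl fun f _ => ?_
        rw [hstep2 _ (hnn f)]
        simp only [shuffleCoeff, List.length_ofFn]
      rw [e2, Finset.sum_comm]
      have e3 : ∀ s ∈ (Finset.range k).powerset,
          (∑ f : Fin k → Fin 3,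
            F (extract (List.ofFn f) s) * F (extract (List.ofFn f) (Finset.range k \ s)))
          = N s.card * N (k - s.card) := by
        intro s hs
        have hsub : s ⊆ Finset.range k := Finset.mem_powerset.mp hs
        have hcard : (Finset.range k \ s).card = k - s.card := by
          rw [Finset.card_sdiff_of_subset hsub, Finset.card_range]
        rw [key k s hsub s.card (k - s.card) rfl hcard (fun u v => F u * F v),
          ← Finset.sum_mul_sum, ← hNF, ← hNF]
      rw [Finset.sum_congr rfl e3]
      rw [Finset.sum_powerset]
      have e4 : ∀ j ∈ Finset.range ((Finset.range k).card + 1),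
          (∑ t ∈ Finset.powersetCard j (Finset.range k), N t.card * N (k - t.card))
          = (k.choose j) • (N j * N (k - j)) := by
        intro j _
        rw [Finset.sum_powersetCard j (Finset.range k) (fun c => N c * N (k - c)),
          Finset.card_range]
      rw [Finset.sum_congr rfl e4, Finset.card_range]
      rw [← Finset.sum_subset (fun j hj => Finset.mem_range.mpr
        (by have := Finset.mem_Ioo.mp hj; omega) :
        Finset.Ioo 0 k ⊆ Finset.range (k+1))]
      · refine Finset.sum_congr rfl fun j _ => ?_
        rw [nsmul_eq_mul]; ring
      · intro j hj hnj
        simp only [Finset.mem_range] at hj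
        simp only [Finset.mem_Ioo] at hnj
        have : j = 0 ∨ j = k := by omega
        rcases this with rfl | rfl
        · rw [hN0]; simp
        · rw [Nat.sub_self, hN0]; simp
    rw [s0, s1, s2]
    ring
  -- factorial
  have hfac : ∀ k : ℕ, N (k+1) = ((k+1).factorial : ℝ) := by
    intro k
    induction k using Nat.strong_induction_on with
    | _ k ih =>
      match k with
      | 0 => simpa using hN1
      | (k+1) =>
        rw [hrec (k+1) (by omega)]
        have hNk : N (k+1) = ((k+1).factorial : ℝ) := ih k (by omega)
        have hterm : ∀ j ∈ Finset.Ioo 0 (k+1),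
            ((k+1).choose j : ℝ) * N j * N (k+1-j) = ((k+1).factorial : ℝ) := by
          intro j hj
          simp only [Finset.mem_Ioo] at hj
          obtain ⟨j', rfl⟩ : ∃ j', j = j' + 1 := ⟨j - 1, by omega⟩
          obtain ⟨i, hi⟩ : ∃ i, k + 1 - (j'+1) = i + 1 := ⟨k - (j'+1), by omega⟩
          have hNkj : N (k+1-(j'+1)) = (((k+1-(j'+1)).factorial : ℕ) : ℝ) := by
            rw [hi]
            exact ih i (by omega)
          rw [ih j' (by omega), hNkj]
          have hle : j' + 1 ≤ k + 1 := by omega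
          have hchoose := Nat.choose_mul_factorial_mul_factorial hle
          exact_mod_cast congrArg (Nat.cast : ℕ → ℝ) hchoose
        rw [Finset.sum_congr rfl hterm, Finset.sum_const, Nat.card_Ioo, hNk]
        have hcard : k + 1 - 0 - 1 = k := by omega
        rw [hcard, nsmul_eq_mul]
        push_cast [Nat.factorial_succ (k+2), Nat.factorial_succ (k+1)]
        ring
  refine ⟨hN1, hrec, fun k hk => ?_⟩
  obtain ⟨k', rfl⟩ : ∃ k', k = k' + 1 := ⟨k - 1, by omega⟩
  exact hfac k'
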